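/- Suppose F : ℂ × ℂ → ℂ is homogeneous of degree n, i.e. F(c·s, c·k) = cⁿ·F(s,k) for all nonzero c ∈ ℂ. If F(s,k) ≠ 0 for all s with Re(s) > 0 and all real k, then for any σ ≥ 0, α ≥ 0 the function s ↦ F(s, k/S_x(s)) has no zero s with Re(s) > 0, where S_x(s) = 1 + σ/(α+s). -/

import Mathlib

theorem pml_no_unstable_roots (F : ℂ → ℂ → ℂ) (n : ℤ)
    (hhom : ∀ c : ℂ, c ≠ 0 → ∀ s k : ℂ, F (c * s) (c * k) = c ^ n * F s k)
    (hF : ∀ s : ℂ, 0 < s.re → ∀ k : ℝ, F s (k : ℂ) ≠ 0)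
    (σ α : ℝ) (hσ : 0 ≤ σ) (hα : 0 ≤ α) :
    ∀ s : ℂ, 0 < s.re → ∀ k : ℝ,
      F s ((k : ℂ) / (1 + (σ : ℂ) / ((α : ℂ) + s))) ≠ 0 := by
  intro s hs k
  set w : ℂ := (α : ℂ) + s with hw
  have hwre : 0 < w.re := by
    simp only [hw, Complex.add_re, Complex.ofReal_re]
    linarith
  have hw0 : w ≠ 0 := fun h => by simp [h] at hwre
  have hnsq : 0 < Complex.normSq w := Complex.normSq_pos.mpr hw0
  set S : ℂ := 1 + (σ : ℂ) / w with hSdef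
  have hdivre : ((σ : ℂ) / w).re = σ * w.re / Complex.normSq w := by
    simp [Complex.div_re]
  have hSre : 1 ≤ S.re := by
    have h1 : 0 ≤ σ * w.re / Complex.normSq w := by positivity
    simp only [hSdef, Complex.add_re, Complex.one_re, hdivre]
    linarith
  have hS0 : S ≠ 0 := fun h => by simp [h] at hSre; linarith
  have hsS : 0 < (s * S).re := by
    have hmul : s * S = s + s * (σ : ℂ) / w := by
      rw [hSdef]; ring
    have hre : (s * (σ : ℂ) / w).re =
        (s.re * σ * w.re + s.im * σ * w.im) / Complex.normSq w := by
      simp [Complex.div_re, Complex.mul_re, Complex.mul_im]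
      ring
    have hwim : w.im = s.im := by simp [hw]
    have hnum : 0 ≤ s.re * σ * w.re + s.im * σ * w.im := by
      have ha : 0 ≤ s.re * σ * w.re := mul_nonneg (mul_nonneg hs.le hσ) hwre.le
      have hb : 0 ≤ s.im * σ * s.im := by nlinarith [mul_self_nonneg s.im]
      rw [hwim]; linarith
    have : 0 ≤ (s * (σ : ℂ) / w).re := by
      rw [hre]; positivity
    rw [hmul, Complex.add_re]
    linarith
  have key := hhom S⁻¹ (inv_ne_zero hS0) (s * S) k
  have h1 : S⁻¹ * (s * S) = s := by field_simp
  have h2 : S⁻¹ * (k : ℂ) = (k : ℂ) / S := by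
    rw [div_eq_mul_inv]; ring
  rw [h1, h2] at key
  rw [key]
  exact mul_ne_zero (zpow_ne_zero n (inv_ne_zero hS0)) (hF _ hsS k)
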